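/- If K and L are unconditional convex bodies in R^n, then the set K^{1/2}L^{1/2} = {z : ∃ x ∈ K, y ∈ L, ∀ i, |z_i| = |x_i|^{1/2}|y_i|^{1/2}} is convex and unconditional. -/

import Mathlib

open MeasureTheory Set Pointwise
open scoped InnerProductSpace ENNReal

noncomputable section

/-- `ℝ^n` with the Euclidean structure. -/
abbrev E (n : ℕ) := EuclideanSpace ℝ (Fin n)

/-- The polar body `K° = {y : ∀ x ∈ K, ⟨x,y⟩ ≤ 1}`. -/
def polarBody {n : ℕ} (K : Set (E n)) : Set (E n) := {y | ∀ x ∈ K, ⟪x, y⟫_ℝ ≤ 1}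

/-- A set is unconditional if it is invariant under coordinate-wise sign changes. -/
def Uncond {n : ℕ} (K : Set (E n)) : Prop :=
  ∀ x ∈ K, ∀ ε : Fin n → ℝ, (∀ i, ε i = 1 ∨ ε i = -1) →
    (WithLp.toLp 2 (fun i => ε i * x i) : E n) ∈ K

/-- A convex body: compact, convex, with nonempty interior. -/
def IsConvexBody {n : ℕ} (K : Set (E n)) : Prop :=
  IsCompact K ∧ Convex ℝ K ∧ (interior K).Nonempty

/-- The Steiner symmetral of `K` in direction `u`: over each point of `u^⊥` the fiber
`K_y` is replaced by `(K_y + (-K_y))/2`. -/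
def steiner {n : ℕ} (u : E n) (K : Set (E n)) : Set (E n) :=
  {x | ∃ s t : ℝ, (x - ⟪x, u⟫_ℝ • u + s • u) ∈ K ∧ (x - ⟪x, u⟫_ℝ • u + t • u) ∈ K ∧
    ⟪x, u⟫_ℝ = (s - t) / 2}

/-- The geometric mean body `K^{1/2} L^{1/2}`. -/
def geomMean {n : ℕ} (K L : Set (E n)) : Set (E n) :=
  {z | ∃ x ∈ K, ∃ y ∈ L, ∀ i, |z i| = |x i| ^ ((1 : ℝ) / 2) * |y i| ^ ((1 : ℝ) / 2)}

/-- Unconditional convex sets are coordinatewise solid. -/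
lemma solid {n : ℕ} {K : Set (E n)} (hc : Convex ℝ K) (hu : Uncond K)
    {x : E n} (hx : x ∈ K) (v : E n) (hv : ∀ i, |v i| ≤ |x i|) : v ∈ K := by
  have main : ∀ s : Finset (Fin n), (WithLp.toLp 2 (fun i => if i ∈ s then v i else x i) : E n) ∈ K := by
    intro s
    induction s using Finset.induction_on with
    | empty => simpa using hx
    | insert j s hj ih =>
      set w : E n := WithLp.toLp 2 (fun i => if i ∈ s then v i else x i) with hw
      have hwK : w ∈ K := ih
      set w' : E n := WithLp.toLp 2 (fun i => (if i = j then (-1:ℝ) else 1) * w i) with hw'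
      have hw'K : w' ∈ K :=
        hu w hwK _ (fun i => by by_cases h : i = j <;> simp [h])
      set t : ℝ := if x j = 0 then 1/2 else (v j / x j + 1)/2 with ht
      have hvj : |v j / x j| ≤ 1 := by
        by_cases h : x j = 0
        · simp [h]
        · rw [abs_div, div_le_one (abs_pos.mpr h)]; exact hv j
      have ht0 : 0 ≤ t := by
        rw [ht]; split_ifs with h
        · norm_num
        · have := (abs_le.mp hvj).1; linarith
      have ht1 : t ≤ 1 := by
        rw [ht]; split_ifs with h
        · norm_num
        · have := (abs_le.mp hvj).2; linarith
      have key := hc hwK hw'K ht0 (by linarith : (0:ℝ) ≤ 1 - t) (by ring)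
      convert key using 1
      ext i
      have happ : (t • w + (1-t) • w') i
          = t * w i + (1-t) * ((if i = j then (-1:ℝ) else 1) * w i) := rfl
      rw [happ]
      by_cases h : i = j
      · subst h
        have hwj : w i = x i := by simp [hw, hj]
        rw [hwj]
        simp only [if_pos rfl, Finset.mem_insert, true_or, if_pos]
        by_cases hxj : x i = 0
        · have : v i = 0 := by have := hv i; simp [hxj] at this; simpa using this
          simp [this, hxj]
        · rw [ht, if_neg hxj]; field_simp; ring
      · simp only [h, if_false, Finset.mem_insert, h, false_or]
        ring
  have h2 : (WithLp.toLp 2 (fun i => if i ∈ Finset.univ then v i else x i) : E n) = v := by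
    ext i; simp
  have := main Finset.univ
  rwa [h2] at this

lemma sqrt_cauchy {p q r s : ℝ} (hp : 0 ≤ p) (hq : 0 ≤ q) (hr : 0 ≤ r) (hs : 0 ≤ s) :
    Real.sqrt (p*q) + Real.sqrt (r*s) ≤ Real.sqrt ((p+r)*(q+s)) := by
  rw [Real.sqrt_mul hp, Real.sqrt_mul hr, Real.sqrt_mul (by linarith)]
  set a := Real.sqrt p; set b := Real.sqrt q; set c := Real.sqrt r; set d := Real.sqrt s
  have ha : a^2 = p := Real.sq_sqrt hp
  have hb : b^2 = q := Real.sq_sqrt hq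
  have hc : c^2 = r := Real.sq_sqrt hr
  have hd : d^2 = s := Real.sq_sqrt hs
  have ha0 : 0 ≤ a := Real.sqrt_nonneg p
  have hb0 : 0 ≤ b := Real.sqrt_nonneg q
  have hc0 : 0 ≤ c := Real.sqrt_nonneg r
  have hd0 : 0 ≤ d := Real.sqrt_nonneg s
  have h1 : Real.sqrt (p+r) = Real.sqrt (a^2+c^2) := by rw [ha, hc]
  have h2 : Real.sqrt (q+s) = Real.sqrt (b^2+d^2) := by rw [hb, hd]
  rw [h1, h2]
  have h3 : (a*b + c*d) ≤ Real.sqrt ((a^2+c^2)*(b^2+d^2)) := by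
    rw [← Real.sqrt_sq (by positivity : (0:ℝ) ≤ a*b + c*d) ]
    apply Real.sqrt_le_sqrt
    nlinarith [sq_nonneg (a*d - b*c)]
  calc a*b + c*d ≤ Real.sqrt ((a^2+c^2)*(b^2+d^2)) := h3
    _ = Real.sqrt (a^2+c^2) * Real.sqrt (b^2+d^2) := Real.sqrt_mul (by positivity) _


lemma rpow_half_mul (a b : ℝ) (ha : 0 ≤ a) (hb : 0 ≤ b) :
    a ^ ((1:ℝ)/2) * b ^ ((1:ℝ)/2) = Real.sqrt (a*b) := by
  rw [Real.sqrt_mul ha, Real.sqrt_eq_rpow, Real.sqrt_eq_rpow]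

theorem main_convex {n : ℕ} {K L : Set (E n)} (hcK : Convex ℝ K) (hcL : Convex ℝ L)
    (hKu : Uncond K) (hLu : Uncond L) : Convex ℝ (geomMean K L) := by
  intro z hz w hw a b ha hb hab
  obtain ⟨x, hx, y, hy, hzxy⟩ := hz
  obtain ⟨x', hx', y', hy', hwxy⟩ := hw
  -- |x| ∈ K, |x'| ∈ K, so X := a|x| + b|x'| ∈ K; similarly Y ∈ L.
  have hax : (WithLp.toLp 2 (fun i => |x i|) : E n) ∈ K :=
    solid hcK hKu hx _ (fun i => by simp)
  have hax' : (WithLp.toLp 2 (fun i => |x' i|) : E n) ∈ K :=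
    solid hcK hKu hx' _ (fun i => by simp)
  have hay : (WithLp.toLp 2 (fun i => |y i|) : E n) ∈ L :=
    solid hcL hLu hy _ (fun i => by simp)
  have hay' : (WithLp.toLp 2 (fun i => |y' i|) : E n) ∈ L :=
    solid hcL hLu hy' _ (fun i => by simp)
  set X : E n := WithLp.toLp 2 fun i => a * |x i| + b * |x' i| with hXdef
  set Y : E n := WithLp.toLp 2 fun i => a * |y i| + b * |y' i| with hYdef
  have hXK : X ∈ K := by
    have := hcK hax hax' ha hb hab
    convert this using 1
    ext i; simp [hXdef]
  have hYL : Y ∈ L := by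
    have := hcL hay hay' ha hb hab
    convert this using 1
    ext i; simp [hYdef]
  have hX0 : ∀ i, 0 ≤ X i := fun i => by positivity
  have hY0 : ∀ i, 0 ≤ Y i := fun i => by positivity
  set g : Fin n → ℝ := fun i => Real.sqrt (X i * Y i) with hgdef
  have hg0 : ∀ i, 0 ≤ g i := fun i => Real.sqrt_nonneg _
  have key : ∀ i, |(a • z + b • w) i| ≤ g i := by
    intro i
    have happ : (a • z + b • w) i = a * z i + b * w i := rfl
    rw [happ]
    have h1 : |a * z i + b * w i| ≤ a * |z i| + b * |w i| := by
      calc |a * z i + b * w i| ≤ |a * z i| + |b * w i| := abs_add_le _ _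
        _ = a * |z i| + b * |w i| := by rw [abs_mul, abs_mul, abs_of_nonneg ha, abs_of_nonneg hb]
    have h2 : a * |z i| = Real.sqrt ((a * |x i|) * (a * |y i|)) := by
      rw [hzxy i, rpow_half_mul _ _ (abs_nonneg _) (abs_nonneg _)]
      rw [show (a * |x i|) * (a * |y i|) = a^2 * (|x i| * |y i|) by ring,
        Real.sqrt_mul (sq_nonneg a), Real.sqrt_sq ha]
    have h3 : b * |w i| = Real.sqrt ((b * |x' i|) * (b * |y' i|)) := by
      rw [hwxy i, rpow_half_mul _ _ (abs_nonneg _) (abs_nonneg _)]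
      rw [show (b * |x' i|) * (b * |y' i|) = b^2 * (|x' i| * |y' i|) by ring,
        Real.sqrt_mul (sq_nonneg b), Real.sqrt_sq hb]
    have h4 := sqrt_cauchy (mul_nonneg ha (abs_nonneg (x i))) (mul_nonneg ha (abs_nonneg (y i)))
      (mul_nonneg hb (abs_nonneg (x' i))) (mul_nonneg hb (abs_nonneg (y' i)))
    calc |a * z i + b * w i| ≤ a * |z i| + b * |w i| := h1
      _ = Real.sqrt ((a * |x i|) * (a * |y i|)) + Real.sqrt ((b * |x' i|) * (b * |y' i|)) := by
          rw [h2, h3]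
      _ ≤ Real.sqrt ((a * |x i| + b * |x' i|) * (a * |y i| + b * |y' i|)) := h4
      _ = g i := rfl
  set c : Fin n → ℝ := fun i => if g i = 0 then 0 else |(a • z + b • w) i| / g i with hcdef
  have hc0 : ∀ i, 0 ≤ c i := by
    intro i
    simp only [hcdef]
    split_ifs with h
    · exact le_refl 0
    · positivity
  have hc1 : ∀ i, c i ≤ 1 := by
    intro i
    simp only [hcdef]
    split_ifs with h
    · exact zero_le_one
    · exact div_le_one_of_le₀ (key i) (hg0 i)
  refine ⟨(WithLp.toLp 2 (fun i => c i * X i) : E n), ?_, (WithLp.toLp 2 (fun i => c i * Y i) : E n), ?_, ?_⟩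
  · apply solid hcK hKu hXK
    intro i
    simp only [PiLp.toLp_apply]
    rw [abs_of_nonneg (mul_nonneg (hc0 i) (hX0 i)), abs_of_nonneg (hX0 i)]
    exact mul_le_of_le_one_left (hX0 i) (hc1 i)
  · apply solid hcL hLu hYL
    intro i
    simp only [PiLp.toLp_apply]
    rw [abs_of_nonneg (mul_nonneg (hc0 i) (hY0 i)), abs_of_nonneg (hY0 i)]
    exact mul_le_of_le_one_left (hY0 i) (hc1 i)
  · intro i
    simp only [PiLp.toLp_apply]
    rw [rpow_half_mul _ _ (abs_nonneg _) (abs_nonneg _)]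
    rw [abs_of_nonneg (mul_nonneg (hc0 i) (hX0 i)), abs_of_nonneg (mul_nonneg (hc0 i) (hY0 i))]
    rw [show (c i * X i) * (c i * Y i) = (c i)^2 * (X i * Y i) by ring,
      Real.sqrt_mul (sq_nonneg _), Real.sqrt_sq (hc0 i)]
    by_cases h : g i = 0
    · have hz0 : |(a • z + b • w) i| = 0 := le_antisymm (h ▸ key i) (abs_nonneg _)
      have hci : c i = 0 := by simp [hcdef, h]
      rw [hci, zero_mul]; exact hz0
    · have : Real.sqrt (X i * Y i) = g i := rfl
      rw [this, hcdef]
      simp only [h, if_false]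
      field_simp


theorem blaschke_santalo_stmt (n : ℕ) (K L : Set (E n))
    (hK : IsConvexBody K) (hL : IsConvexBody L) (hKu : Uncond K) (hLu : Uncond L) :
    Convex ℝ (geomMean K L) ∧ Uncond (geomMean K L) := by
  refine ⟨main_convex hK.2.1 hL.2.1 hKu hLu, ?_⟩
  intro z hz ε hε
  obtain ⟨x, hx, y, hy, h⟩ := hz
  refine ⟨x, hx, y, hy, fun i => ?_⟩
  have : |(WithLp.toLp 2 (fun i => ε i * z i) : E n) i| = |ε i| * |z i| := abs_mul _ _
  rw [this]
  rcases hε i with h1 | h1 <;> simp [h1, h i]
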